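/- For n large, χ(kg^r_{r-1}(binom([n],2))) = n − ⌊r/2⌋ is strictly smaller than χ(KG^r_{r-1}(binom([n],2))) = n − 1 whenever r ≥ 4; hence the chromatic numbers of generalized Kneser hypergraphs with and without multiplicities can differ by an arbitrarily large amount (⌊r/2⌋ − 1) as r grows. -/
import Mathlib


/-- The family of all 2-subsets of `[n] = {1,…,n}`. -/
def pairs (n : ℕ) : Finset (Finset ℕ) := (Finset.Icc 1 n).powersetCard 2

/-- An edge of the multiplicity-free Kneser hypergraph `kg^r_s(S)`. -/
def kgEdge (r s : ℕ) (S : Finset (Finset ℕ)) (e : Finset (Finset ℕ)) : Prop :=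
  e.card = r ∧ e ⊆ S ∧ ∀ i : ℕ, (e.filter fun T => i ∈ T).card ≤ s

/-- An edge of the Kneser hypergraph with multiplicities `KG^r_s(S)`. -/
def KGEdge (r s : ℕ) (S : Finset (Finset ℕ)) (e : Multiset (Finset ℕ)) : Prop :=
  Multiset.card e = r ∧ (∀ A ∈ e, A ∈ S) ∧
    ∀ i : ℕ, e.countP (fun T => i ∈ T) ≤ s

/-- The chromatic number of `kg^r_s(S)`. -/
noncomputable def chromkg (r s : ℕ) (S : Finset (Finset ℕ)) : ℕ :=
  sInf {m | ∃ c : Finset ℕ → Fin m,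
    ∀ e, kgEdge r s S e → ∃ A ∈ e, ∃ B ∈ e, c A ≠ c B}

/-- The chromatic number of `KG^r_s(S)`. -/
noncomputable def chromKG (r s : ℕ) (S : Finset (Finset ℕ)) : ℕ :=
  sInf {m | ∃ c : Finset ℕ → Fin m,
    ∀ e, KGEdge r s S e → ∃ A ∈ e, ∃ B ∈ e, c A ≠ c B}

/-! ### Auxiliary lemmas -/

section Aux

open Finset

lemma countP_replicate {α : Type*} (n : ℕ) (A : α) (p : α → Prop) [DecidablePred p] :
    (Multiset.replicate n A).countP p = if p A then n else 0 := by
  induction n with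
  | zero => simp
  | succ n ih => rw [Multiset.replicate_succ, Multiset.countP_cons]; split <;> simp_all

lemma mem_pairs {n : ℕ} {A : Finset ℕ} : A ∈ pairs n ↔ A ⊆ Finset.Icc 1 n ∧ A.card = 2 :=
  Finset.mem_powersetCard

lemma pairs_struct {n : ℕ} {A : Finset ℕ} (h : A ∈ pairs n) :
    ∃ a b, a < b ∧ 1 ≤ a ∧ b ≤ n ∧ A = {a, b} := by
  obtain ⟨hsub, hcard⟩ := mem_pairs.mp h
  obtain ⟨a, b, hab, rfl⟩ := Finset.card_eq_two.mp hcard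
  have ha := hsub (show a ∈ ({a, b} : Finset ℕ) by simp)
  have hb := hsub (show b ∈ ({a, b} : Finset ℕ) by simp)
  simp only [Finset.mem_Icc] at ha hb
  rcases lt_or_gt_of_ne hab with h' | h'
  · exact ⟨a, b, h', ha.1, hb.2, rfl⟩
  · exact ⟨b, a, h', hb.1, ha.2, by rw [Finset.pair_comm]⟩

lemma two_mem_eq {s : Finset ℕ} {u w : ℕ} (hc : s.card = 2) (hu : u ∈ s) (hw : w ∈ s)
    (huw : u ≠ w) : s = {u, w} :=
  (Finset.eq_of_subset_of_card_le
    (by simp [Finset.insert_subset_iff, hu, hw])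
    (by rw [hc, Finset.card_pair huw])).symm

lemma pair_min' {a b : ℕ} (hab : a < b) (h : ({a, b} : Finset ℕ).Nonempty) :
    ({a, b} : Finset ℕ).min' h = a := by
  apply le_antisymm (Finset.min'_le _ a (by simp))
  apply Finset.le_min'
  intro y hy
  simp only [Finset.mem_insert, Finset.mem_singleton] at hy
  rcases hy with rfl | rfl <;> omega

lemma pair_max' {a b : ℕ} (hab : a < b) (h : ({a, b} : Finset ℕ).Nonempty) :
    ({a, b} : Finset ℕ).max' h = b := by
  apply le_antisymm
  · apply Finset.max'_le
    intro y hy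
    simp only [Finset.mem_insert, Finset.mem_singleton] at hy
    rcases hy with rfl | rfl <;> omega
  · exact Finset.le_max' _ b (by simp)

/-- A family of pairs containing no monochromatic multiset-edge has a common vertex. -/
lemma KG_center (n r : ℕ) (hr : 4 ≤ r) (F : Finset (Finset ℕ)) (hFp : F ⊆ pairs n)
    (hmono : ∀ e : Multiset (Finset ℕ), KGEdge r (r-1) (pairs n) e → ¬ (∀ A ∈ e, A ∈ F))
    (hne : F.Nonempty) : ∃ v, ∀ P ∈ F, v ∈ P := by
  classical
  obtain ⟨A, hA⟩ := hne
  obtain ⟨a, b, hab, ha1, hbn, hAeq⟩ := pairs_struct (hFp hA)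
  by_contra hno
  push_neg at hno
  obtain ⟨B, hB, haB⟩ := hno a
  obtain ⟨C, hC, hbC⟩ := hno b
  refine hmono (Multiset.replicate (r-2) A + (B ::ₘ {C})) ⟨?_, ?_, ?_⟩ ?_
  · simp only [Multiset.card_add, Multiset.card_replicate, Multiset.card_cons,
      Multiset.card_singleton]
    omega
  · intro X hX
    simp only [Multiset.mem_add, Multiset.mem_replicate, Multiset.mem_cons,
      Multiset.mem_singleton] at hX
    rcases hX with ⟨-, rfl⟩ | rfl | rfl
    exacts [hFp hA, hFp hB, hFp hC]
  · intro i
    have hC1 : Multiset.countP (fun T => i ∈ T) ({C} : Multiset (Finset ℕ)) =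
        if i ∈ C then 1 else 0 := by
      rw [show ({C} : Multiset (Finset ℕ)) = C ::ₘ 0 from rfl, Multiset.countP_cons,
        Multiset.countP_zero]
      split <;> simp
    rw [Multiset.countP_add, countP_replicate, Multiset.countP_cons, hC1]
    have hiA : i ∈ A → (i = a ∨ i = b) := by
      intro h; rw [hAeq] at h
      simp only [Finset.mem_insert, Finset.mem_singleton] at h; exact h
    have key : ¬ (i ∈ A ∧ i ∈ B ∧ i ∈ C) := by
      rintro ⟨h1, h2, h3⟩
      rcases hiA h1 with rfl | rfl
      exacts [haB h2, hbC h3]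
    split_ifs with h1 h2 h3 h2 h3 h3 <;> try omega
    exact absurd ⟨h1, h3, h2⟩ key
  · intro X hX
    simp only [Multiset.mem_add, Multiset.mem_replicate, Multiset.mem_cons,
      Multiset.mem_singleton] at hX
    rcases hX with ⟨-, rfl⟩ | rfl | rfl
    exacts [hA, hB, hC]

lemma KG_upper (n r : ℕ) (hr : 4 ≤ r) (hn : r ≤ n) :
    ∃ c : Finset ℕ → Fin (n-1), ∀ e, KGEdge r (r-1) (pairs n) e →
      ∃ A ∈ e, ∃ B ∈ e, c A ≠ c B := by
  classical
  have hpos : 0 < n - 1 := by omega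
  have hbnd : ∀ A : Finset ℕ, ∀ h : A ∈ pairs n,
      A.min' (Finset.card_pos.mp (by rw [(mem_pairs.mp h).2]; omega)) - 1 < n - 1 := by
    intro A h
    obtain ⟨a, b, hab, ha1, hbn, hAeq⟩ := pairs_struct h
    subst hAeq
    rw [pair_min' hab]
    omega
  refine ⟨fun A => if h : A ∈ pairs n then
      ⟨A.min' (Finset.card_pos.mp (by rw [(mem_pairs.mp h).2]; omega)) - 1, hbnd A h⟩
    else ⟨0, hpos⟩, ?_⟩
  intro e he
  by_contra hsame
  push_neg at hsame
  obtain ⟨hec, hep, hecnt⟩ := he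
  have hene : e ≠ 0 := by
    intro h; rw [h] at hec; simp at hec; omega
  obtain ⟨A0, hA0⟩ := Multiset.exists_mem_of_ne_zero hene
  obtain ⟨a0, b0, hab0, ha01, hb0n, hA0eq⟩ := pairs_struct (hep A0 hA0)
  have hv : ∀ A ∈ e, a0 ∈ A := by
    intro A hA
    have hAp := hep A hA
    obtain ⟨a, b, hab, ha1, hbn, hAeq⟩ := pairs_struct hAp
    have hceq := hsame A hA A0 hA0
    rw [dif_pos hAp, dif_pos (hep A0 hA0), Fin.mk.injEq] at hceq
    have hminA : A.min' (Finset.card_pos.mp (by rw [(mem_pairs.mp hAp).2]; omega)) = a := by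
      subst hAeq; exact pair_min' hab _
    have hminA0 : A0.min' (Finset.card_pos.mp
        (by rw [(mem_pairs.mp (hep A0 hA0)).2]; omega)) = a0 := by
      subst hA0eq; exact pair_min' hab0 _
    rw [hminA, hminA0] at hceq
    have : a = a0 := by omega
    subst this
    rw [hAeq]; simp
  have hcnt := hecnt a0
  rw [Multiset.countP_eq_card.mpr hv] at hcnt
  omega

lemma KG_lower (n r m : ℕ) (hr : 4 ≤ r) (hn : r ≤ n)
    (c : Finset ℕ → Fin m)
    (hc : ∀ e, KGEdge r (r-1) (pairs n) e → ∃ A ∈ e, ∃ B ∈ e, c A ≠ c B) :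
    n - 1 ≤ m := by
  classical
  by_contra hm
  push_neg at hm
  set F : Fin m → Finset (Finset ℕ) := fun j => (pairs n).filter (fun A => c A = j) with hF
  have hcent : ∀ j : Fin m, ∃ v, ∀ P ∈ F j, v ∈ P := by
    intro j
    by_cases hne : (F j).Nonempty
    · refine KG_center n r hr (F j) (Finset.filter_subset _ _) ?_ hne
      intro e he hall
      obtain ⟨A, hA, B, hB, hAB⟩ := hc e he
      have h1 := (Finset.mem_filter.mp (hall A hA)).2
      have h2 := (Finset.mem_filter.mp (hall B hB)).2
      exact hAB (by rw [h1, h2])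
    · exact ⟨0, fun P hP => absurd ⟨P, hP⟩ hne⟩
  choose v hv using hcent
  set W := Finset.Icc 1 n \ Finset.univ.image v with hW
  have hWcard : 2 ≤ W.card := by
    have h1 := Finset.le_card_sdiff (Finset.univ.image v) (Finset.Icc 1 n)
    rw [← hW] at h1
    have h2 : (Finset.univ.image v).card ≤ m := le_trans Finset.card_image_le (by simp)
    have h3 : (Finset.Icc 1 n).card = n := by simp
    omega
  obtain ⟨u, hu, w, hw, huw⟩ := Finset.one_lt_card.mp (show 1 < W.card by omega)
  have hP : ({u, w} : Finset ℕ) ∈ pairs n := by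
    rw [mem_pairs]
    refine ⟨?_, Finset.card_pair huw⟩
    intro x hx
    simp only [Finset.mem_insert, Finset.mem_singleton] at hx
    rcases hx with rfl | rfl
    exacts [(Finset.mem_sdiff.mp hu).1, (Finset.mem_sdiff.mp hw).1]
  have hmem : ({u, w} : Finset ℕ) ∈ F (c {u, w}) := Finset.mem_filter.mpr ⟨hP, rfl⟩
  have hvin := hv (c {u, w}) _ hmem
  have hvim : v (c {u, w}) ∈ Finset.univ.image v :=
    Finset.mem_image_of_mem v (Finset.mem_univ _)
  simp only [Finset.mem_insert, Finset.mem_singleton] at hvin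
  rcases hvin with h | h
  · exact (Finset.mem_sdiff.mp hu).2 (h ▸ hvim)
  · exact (Finset.mem_sdiff.mp hw).2 (h ▸ hvim)

/-- A big family of pairs in which every `r`-subfamily has a common vertex is a star. -/
lemma kg_star (n r : ℕ) (hr : 4 ≤ r) (F : Finset (Finset ℕ)) (hFp : F ⊆ pairs n)
    (hmono : ∀ e, e ⊆ F → e.card = r → ∃ i, ∀ T ∈ e, i ∈ T)
    (hcard : r ≤ F.card) : ∃ v, ∀ P ∈ F, v ∈ P := by
  classical
  obtain ⟨e0, he0F, he0c⟩ := Finset.exists_subset_card_eq hcard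
  obtain ⟨v, hv⟩ := hmono e0 he0F he0c
  refine ⟨v, fun P hP => ?_⟩
  by_contra hvP
  have hPe0 : P ∉ e0 := fun h => hvP (hv P h)
  obtain ⟨Q1, hQ1⟩ : e0.Nonempty := Finset.card_pos.mp (by omega)
  have hc1 : (insert P (e0.erase Q1)).card = r := by
    rw [Finset.card_insert_of_notMem (fun h => hPe0 (Finset.erase_subset _ _ h)),
      Finset.card_erase_of_mem hQ1, he0c]
    omega
  have hsub1 : insert P (e0.erase Q1) ⊆ F := by
    intro X hX
    rw [Finset.mem_insert] at hX
    rcases hX with rfl | hX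
    exacts [hP, he0F (Finset.erase_subset _ _ hX)]
  obtain ⟨w, hw⟩ := hmono _ hsub1 hc1
  have hwP : w ∈ P := hw P (Finset.mem_insert_self _ _)
  have h2 : 1 < (e0.erase Q1).card := by
    rw [Finset.card_erase_of_mem hQ1, he0c]; omega
  obtain ⟨Q2, hQ2, Q3, hQ3, hQ23⟩ := Finset.one_lt_card.mp h2
  have hwv : w ≠ v := fun h => hvP (h ▸ hwP)
  have hQ2' : Q2 = {v, w} := by
    refine two_mem_eq ?_ (hv Q2 (Finset.erase_subset _ _ hQ2))
      (hw Q2 (Finset.mem_insert_of_mem hQ2)) (Ne.symm hwv)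
    exact (mem_pairs.mp (hFp (he0F (Finset.erase_subset _ _ hQ2)))).2
  have hQ3' : Q3 = {v, w} := by
    refine two_mem_eq ?_ (hv Q3 (Finset.erase_subset _ _ hQ3))
      (hw Q3 (Finset.mem_insert_of_mem hQ3)) (Ne.symm hwv)
    exact (mem_pairs.mp (hFp (he0F (Finset.erase_subset _ _ hQ3)))).2
  exact hQ23 (hQ2'.trans hQ3'.symm)

lemma kg_upper (n r : ℕ) (hr : 4 ≤ r) (hn : r ≤ n) :
    ∃ c : Finset ℕ → Fin (n - r/2), ∀ e, kgEdge r (r-1) (pairs n) e →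
      ∃ A ∈ e, ∃ B ∈ e, c A ≠ c B := by
  classical
  set k := r / 2 with hk
  have hk2 : 2 ≤ k := by omega
  have h2k : 2*k ≤ r := by omega
  have hr2k : r ≤ 2*k + 1 := by omega
  have hpos : 0 < n - k := by omega
  set L : ℕ := n - 2*k + 2 with hL
  set idx : Finset ℕ → ℕ := fun A =>
    if hA : A.Nonempty then
      (if A.min' hA < L then A.min' hA - 1
       else n - 2*k + 1 +
         (min (A.max' hA - A.min' hA) (2*k - 1 - (A.max' hA - A.min' hA)) - 1))
    else 0 with hidx
  have idx_eq : ∀ a b : ℕ, a < b →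
      idx {a, b} = if a < L then a - 1
        else n - 2*k + 1 + (min (b - a) (2*k - 1 - (b - a)) - 1) := by
    intro a b hab
    have hne : ({a, b} : Finset ℕ).Nonempty := ⟨a, by simp⟩
    rw [hidx]
    simp only [dif_pos hne, pair_min' hab, pair_max' hab]
  have hbnd : ∀ A ∈ pairs n, idx A < n - k := by
    intro A hA
    obtain ⟨a, b, hab, ha1, hbn, hAeq⟩ := pairs_struct hA
    subst hAeq
    rw [idx_eq a b hab]
    split_ifs with h
    · omega
    · omega
  refine ⟨fun A => if h : A ∈ pairs n then ⟨idx A, hbnd A h⟩ else ⟨0, hpos⟩, ?_⟩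
  intro e he
  by_contra hsame
  push_neg at hsame
  obtain ⟨hec, hep, hecnt⟩ := he
  obtain ⟨A0, hA0⟩ : e.Nonempty := Finset.card_pos.mp (by omega)
  obtain ⟨a0, b0, hab0, ha01, hb0n, hA0eq⟩ := pairs_struct (hep hA0)
  have hidxeq : ∀ A ∈ e, idx A = idx A0 := by
    intro A hA
    have hceq := hsame A hA A0 hA0
    rw [dif_pos (hep hA), dif_pos (hep hA0), Fin.mk.injEq] at hceq
    exact hceq
  by_cases hstar : a0 < L
  · -- star class: everything contains a0
    have hall : ∀ A ∈ e, a0 ∈ A := by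
      intro A hA
      obtain ⟨a, b, hab, ha1, hbn, hAeq⟩ := pairs_struct (hep hA)
      have h1 := hidxeq A hA
      rw [hAeq, hA0eq, idx_eq a b hab, idx_eq a0 b0 hab0, if_pos hstar] at h1
      have ha0 : a = a0 := by
        split_ifs at h1 with h2
        · omega
        · -- block value is too big
          exfalso
          have hgap1 : 1 ≤ b - a := by omega
          omega
      rw [hAeq, ha0]; simp
    have hcnt := hecnt a0
    rw [Finset.filter_true_of_mem hall] at hcnt
    omega
  · -- block class with circular difference d
    set d := min (b0 - a0) (2*k - 1 - (b0 - a0)) with hd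
    set φ : Finset ℕ → ℕ := fun A =>
      if hA : A.Nonempty then
        (if A.max' hA - A.min' hA = d then A.min' hA else A.min' hA + (2*k - 1 - d))
      else 0 with hφ
    have φ_eq : ∀ a b : ℕ, a < b →
        φ {a, b} = if b - a = d then a else a + (2*k - 1 - d) := by
      intro a b hab
      have hne : ({a, b} : Finset ℕ).Nonempty := ⟨a, by simp⟩
      rw [hφ]
      simp only [dif_pos hne, pair_min' hab, pair_max' hab]
    -- structure of members of e
    have hstruct : ∀ A ∈ e, ∃ a b, a < b ∧ L ≤ a ∧ b ≤ n ∧ A = {a, b} ∧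
        (b - a = d ∨ b - a = 2*k - 1 - d) := by
      intro A hA
      obtain ⟨a, b, hab, ha1, hbn, hAeq⟩ := pairs_struct (hep hA)
      have h1 := hidxeq A hA
      rw [hAeq, hA0eq, idx_eq a b hab, idx_eq a0 b0 hab0, if_neg hstar] at h1
      have hd1 : 1 ≤ d := by
        have : L ≤ a0 := by omega
        have hg0 : 1 ≤ b0 - a0 := by omega
        have hg0' : b0 - a0 ≤ 2*k - 2 := by omega
        omega
      have hdk : d ≤ k - 1 := by omega
      have haL : ¬ a < L := by
        intro h2
        rw [if_pos h2] at h1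
        omega
      rw [if_neg haL] at h1
      push_neg at haL
      have hgap : min (b - a) (2*k - 1 - (b - a)) = d := by omega
      have hbL : b - a ≤ 2*k - 2 := by omega
      refine ⟨a, b, hab, haL, hbn, hAeq, ?_⟩
      omega
    -- φ is injective on e with values in Icc L n
    have hmapsto : ∀ A ∈ e, φ A ∈ Finset.Icc L n := by
      intro A hA
      obtain ⟨a, b, hab, haL, hbn, hAeq, hg⟩ := hstruct A hA
      rw [hAeq, φ_eq a b hab]
      have hd1 : 1 ≤ d ∧ d ≤ k - 1 := by
        constructor
        · have : L ≤ a0 := by omega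
          have hg0 : 1 ≤ b0 - a0 := by omega
          have hg0' : b0 - a0 ≤ 2*k - 2 := by omega
          omega
        · omega
      split_ifs with h2
      · simp only [Finset.mem_Icc]; omega
      · simp only [Finset.mem_Icc]
        have : b - a = 2*k - 1 - d := by omega
        omega
    have hinj : Set.InjOn φ ↑e := by
      intro A hAe B hBe hAB
      obtain ⟨a, b, hab, haL, hbn, hAeq, hgA⟩ := hstruct A hAe
      obtain ⟨a', b', hab', haL', hbn', hBeq, hgB⟩ := hstruct B hBe
      have hd1 : 1 ≤ d := by
        have : L ≤ a0 := by omega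
        have hg0 : 1 ≤ b0 - a0 := by omega
        have hg0' : b0 - a0 ≤ 2*k - 2 := by omega
        omega
      have hdk : d ≤ k - 1 := by omega
      rw [hAeq, hBeq, φ_eq a b hab, φ_eq a' b' hab'] at hAB
      rw [hAeq, hBeq]
      split_ifs at hAB with h2 h3 h3
      · have : a = a' := hAB
        have : b = b' := by omega
        subst ‹a = a'›; subst ‹b = b'›; rfl
      · -- a = a' + (2k-1-d) : impossible since ranges disjoint
        exfalso
        have hbB : b' - a' = 2*k - 1 - d := by omega
        omega
      · exfalso
        have hbA : b - a = 2*k - 1 - d := by omega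
        omega
      · have hbA : b - a = 2*k - 1 - d := by omega
        have hbB : b' - a' = 2*k - 1 - d := by omega
        have : a = a' := by omega
        have : b = b' := by omega
        subst ‹a = a'›; subst ‹b = b'›; rfl
    have hcard : e.card ≤ (Finset.Icc L n).card :=
      Finset.card_le_card_of_injOn φ hmapsto hinj
    rw [Nat.card_Icc] at hcard
    omega

lemma kg_lower (n r m : ℕ) (hr : 4 ≤ r) (hn : r ≤ n)
    (c : Finset ℕ → Fin m)
    (hc : ∀ e, kgEdge r (r-1) (pairs n) e → ∃ A ∈ e, ∃ B ∈ e, c A ≠ c B) :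
    n - r/2 ≤ m := by
  classical
  set k := r / 2 with hk
  have hk2 : 2 ≤ k := by omega
  by_contra hm
  push_neg at hm
  set F : Fin m → Finset (Finset ℕ) := fun j => (pairs n).filter (fun A => c A = j) with hF
  have hmono : ∀ j, ∀ e, e ⊆ F j → e.card = r → ∃ i, ∀ T ∈ e, i ∈ T := by
    intro j e heF hec
    by_contra hno
    push_neg at hno
    have hedge : kgEdge r (r-1) (pairs n) e := by
      refine ⟨hec, fun X hX => (Finset.mem_filter.mp (heF hX)).1, fun i => ?_⟩
      obtain ⟨T, hT, hiT⟩ := hno i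
      have hss : e.filter (fun T => i ∈ T) ⊂ e := Finset.filter_ssubset.mpr ⟨T, hT, hiT⟩
      have := Finset.card_lt_card hss
      omega
    obtain ⟨A, hA, B, hB, hAB⟩ := hc e hedge
    exact hAB (by rw [(Finset.mem_filter.mp (heF hA)).2, (Finset.mem_filter.mp (heF hB)).2])
  have hcent : ∀ j, ∃ v, r ≤ (F j).card → ∀ P ∈ F j, v ∈ P := by
    intro j
    by_cases hb : r ≤ (F j).card
    · obtain ⟨v, hv⟩ := kg_star n r hr (F j) (Finset.filter_subset _ _) (hmono j) hb
      exact ⟨v, fun _ => hv⟩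
    · exact ⟨0, fun h => absurd h hb⟩
  choose v hv using hcent
  set Bg : Finset (Fin m) := Finset.univ.filter (fun j => r ≤ (F j).card) with hBg
  set Sm : Finset (Fin m) := Finset.univ.filter (fun j => ¬ r ≤ (F j).card) with hSm
  set W := Finset.Icc 1 n \ Bg.image v with hW
  have hWsub : W ⊆ Finset.Icc 1 n := Finset.sdiff_subset
  have hcover : W.powersetCard 2 ⊆ Sm.biUnion F := by
    intro P hP
    have hPp : P ∈ pairs n := Finset.powersetCard_mono hWsub hP
    have hPF : P ∈ F (c P) := Finset.mem_filter.mpr ⟨hPp, rfl⟩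
    have hsmall : ¬ r ≤ (F (c P)).card := by
      intro hb
      have hvP := hv (c P) hb P hPF
      have hvW : v (c P) ∈ W := (Finset.mem_powersetCard.mp hP).1 hvP
      have hvim : v (c P) ∈ Bg.image v :=
        Finset.mem_image_of_mem v (Finset.mem_filter.mpr ⟨Finset.mem_univ _, hb⟩)
      exact (Finset.mem_sdiff.mp hvW).2 hvim
    exact Finset.mem_biUnion.mpr ⟨c P, Finset.mem_filter.mpr ⟨Finset.mem_univ _, hsmall⟩, hPF⟩
  have hcount : W.card.choose 2 ≤ Sm.card * (r-1) := by
    calc W.card.choose 2 = (W.powersetCard 2).card := (Finset.card_powersetCard 2 W).symm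
    _ ≤ (Sm.biUnion F).card := Finset.card_le_card hcover
    _ ≤ ∑ j ∈ Sm, (F j).card := Finset.card_biUnion_le
    _ ≤ Sm.card * (r-1) := by
        rw [← smul_eq_mul]
        exact Finset.sum_le_card_nsmul _ _ _ (fun j hj => by
          have := (Finset.mem_filter.mp hj).2
          omega)
  -- arithmetic contradiction
  have hsm : Bg.card + Sm.card = m := by
    rw [hBg, hSm]
    rw [Finset.card_filter_add_card_filter_not]
    simp
  have hWc : n ≤ W.card + Bg.card := by
    have h1 := Finset.le_card_sdiff (Bg.image v) (Finset.Icc 1 n)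
    rw [← hW] at h1
    have h2 : (Bg.image v).card ≤ Bg.card := Finset.card_image_le
    have h3 : (Finset.Icc 1 n).card = n := by simp
    omega
  set t := W.card with ht
  set s := Bg.card with hs
  set s' := Sm.card with hs'
  have hch : t.choose 2 = t * (t-1) / 2 := Nat.choose_two_right t
  have htt : t * (t-1) ≤ 2 * (s' * (r-1)) + 1 := by
    have h1 : t * (t-1) / 2 ≤ s' * (r-1) := by rw [← hch]; exact hcount
    generalize hu : t * (t-1) = u at *
    omega
  have hs'le : s' + k + 1 ≤ t := by omega
  have hrk : r - 1 ≤ 2 * k := by omega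
  have hkey : s' * (r-1) ≤ s' * (2*k) := Nat.mul_le_mul_left s' hrk
  -- cast to integers
  have hfalse : False := by
    have h1 : (t : ℤ) * (t - 1) ≤ 2 * (s' * (2*k)) + 1 := by
      have := le_trans htt (by omega : 2 * (s' * (r-1)) + 1 ≤ 2 * (s' * (2*k)) + 1)
      have ht1 : (1:ℕ) ≤ t := by omega
      push_cast
      have : ((t * (t-1) : ℕ) : ℤ) ≤ ((2 * (s' * (2*k)) + 1 : ℕ) : ℤ) := by exact_mod_cast this
      push_cast at this
      rw [Nat.cast_sub ht1] at this
      push_cast at this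
      linarith
    have h2 : (s' : ℤ) + k + 1 ≤ t := by exact_mod_cast hs'le
    have h3 : (2 : ℤ) ≤ k := by exact_mod_cast hk2
    have h4 : (0 : ℤ) ≤ s' := by positivity
    nlinarith [sq_nonneg (2*(t:ℤ) - 4*(k:ℤ) - 1), mul_le_mul_of_nonneg_left h2 (by linarith : (0:ℤ) ≤ 4*(k:ℤ))]
  exact hfalse

end Aux

/-- For `4 ≤ r ≤ n`, `χ(kg^r_{r-1}(binom([n],2))) = n - ⌊r/2⌋` is strictly
smaller than `χ(KG^r_{r-1}(binom([n],2))) = n - 1`; the difference is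
`⌊r/2⌋ - 1`, which is arbitrarily large as `r` grows. -/
theorem stmt19 (n r : ℕ) (hr : 4 ≤ r) (hn : r ≤ n) :
    chromkg r (r - 1) (pairs n) = n - r / 2 ∧
    chromKG r (r - 1) (pairs n) = n - 1 ∧
    chromkg r (r - 1) (pairs n) < chromKG r (r - 1) (pairs n) ∧
    chromKG r (r - 1) (pairs n) - chromkg r (r - 1) (pairs n) = r / 2 - 1 := by
  have e1 : chromkg r (r - 1) (pairs n) = n - r / 2 := by
    apply le_antisymm
    · exact Nat.sInf_le (kg_upper n r hr hn)
    · refine le_csInf ⟨_, kg_upper n r hr hn⟩ ?_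
      rintro m ⟨c, hc⟩
      exact kg_lower n r m hr hn c hc
  have e2 : chromKG r (r - 1) (pairs n) = n - 1 := by
    apply le_antisymm
    · exact Nat.sInf_le (KG_upper n r hr hn)
    · refine le_csInf ⟨_, KG_upper n r hr hn⟩ ?_
      rintro m ⟨c, hc⟩
      exact KG_lower n r m hr hn c hc
  refine ⟨e1, e2, ?_, ?_⟩ <;> rw [e1, e2] <;> omega
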